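/- Let n ≥ 1 be a natural number and let λ ∈ ℝ with λ ∉ {0, 1}. Define X := {2^i + λ·2^j : i, j ∈ {1,…,n}}, Y := {−2^k − 2^l : k, l ∈ {1,…,n}}, and G := {(2^i + λ·2^j, −2^i − 2^j) : i, j ∈ {1,…,n}}. Then G ⊆ X × Y, 0 ∉ Y, |G| = n², |X +_G Y| ≤ n, |X +_G λY| ≤ n, and |X /_G Y| ≤ 2n − 1. -/
import Mathlib


/-- The explicit ratio construction: with
`X = {2^i + λ2^j}`, `Y = {-2^k - 2^l}` and `G = {(2^i + λ2^j, -2^i - 2^j)}`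
for `i, j, k, l ∈ {1,…,n}`, we have `G ⊆ X × Y`, `0 ∉ Y`, `|G| = n²`,
`|X +_G Y| ≤ n`, `|X +_G λY| ≤ n` and `|X /_G Y| ≤ 2n - 1`. -/
theorem explicit_ratio_construction (n : ℕ) (hn : 1 ≤ n)
    (lam : ℝ) (hlam0 : lam ≠ 0) (hlam1 : lam ≠ 1) :
    let I := Finset.Icc 1 n
    let X := (I ×ˢ I).image (fun p => (2 : ℝ) ^ p.1 + lam * (2 : ℝ) ^ p.2)
    let Y := (I ×ˢ I).image (fun p => -(2 : ℝ) ^ p.1 - (2 : ℝ) ^ p.2)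
    let G := (I ×ˢ I).image
      (fun p => ((2 : ℝ) ^ p.1 + lam * (2 : ℝ) ^ p.2,
                 -(2 : ℝ) ^ p.1 - (2 : ℝ) ^ p.2))
    G ⊆ X ×ˢ Y ∧
    (0 : ℝ) ∉ Y ∧
    G.card = n ^ 2 ∧
    (G.image (fun p => p.1 + p.2)).card ≤ n ∧
    (G.image (fun p => p.1 + lam * p.2)).card ≤ n ∧
    (G.image (fun p => p.1 / p.2)).card ≤ 2 * n - 1 := by
  intro I X Y G
  have hpow : ∀ k : ℕ, (0:ℝ) < 2 ^ k := fun k => by positivity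
  have hinj : Function.Injective (fun k : ℕ => (2:ℝ) ^ k) := by
    intro a b hab
    simp only at hab
    have : ((2^a : ℕ) : ℝ) = ((2^b : ℕ) : ℝ) := by push_cast; exact hab
    exact Nat.pow_right_injective (le_refl 2) (Nat.cast_injective this)
  have hIcard : I.card = n := by simp [I]
  refine ⟨?_, ?_, ?_, ?_, ?_, ?_⟩
  · intro x hx
    simp only [G, Finset.mem_image] at hx
    obtain ⟨p, hp, rfl⟩ := hx
    simp only [Finset.mem_product, X, Y, Finset.mem_image]
    exact ⟨⟨p, Finset.mem_product.mp hp, rfl⟩, ⟨p, Finset.mem_product.mp hp, rfl⟩⟩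
  · intro h
    simp only [Y, Finset.mem_image] at h
    obtain ⟨p, hp, h⟩ := h
    nlinarith [hpow p.1, hpow p.2]
  · rw [show G = _ from rfl, Finset.card_image_of_injOn, Finset.card_product, hIcard, sq]
    intro p hp q hq h
    have h1 : (2:ℝ)^p.1 + lam*2^p.2 = 2^q.1 + lam*2^q.2 := congrArg Prod.fst h
    have h2 : -(2:ℝ)^p.1 - 2^p.2 = -(2:ℝ)^q.1 - 2^q.2 := congrArg Prod.snd h
    have hsum : (lam-1)*(2:ℝ)^p.2 = (lam-1)*2^q.2 := by linarith
    have h2' : (2:ℝ)^p.2 = 2^q.2 :=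
      mul_left_cancel₀ (sub_ne_zero.mpr hlam1) hsum
    have hj : p.2 = q.2 := hinj h2'
    have h1' : (2:ℝ)^p.1 = 2^q.1 := by rw [hj] at h2; linarith
    have hi : p.1 = q.1 := hinj h1'
    exact Prod.ext hi hj
  · have hsub : (G.image (fun p => p.1 + p.2)) ⊆
        I.image (fun j => (lam - 1) * (2:ℝ) ^ j) := by
      intro x hx
      simp only [G, Finset.mem_image] at hx
      obtain ⟨y, ⟨p, hp, rfl⟩, rfl⟩ := hx
      exact Finset.mem_image.mpr ⟨p.2, (Finset.mem_product.mp hp).2, by ring⟩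
    calc _ ≤ _ := Finset.card_le_card hsub
      _ ≤ I.card := Finset.card_image_le
      _ = n := hIcard
  · have hsub : (G.image (fun p => p.1 + lam * p.2)) ⊆
        I.image (fun i => (1 - lam) * (2:ℝ) ^ i) := by
      intro x hx
      simp only [G, Finset.mem_image] at hx
      obtain ⟨y, ⟨p, hp, rfl⟩, rfl⟩ := hx
      exact Finset.mem_image.mpr ⟨p.1, (Finset.mem_product.mp hp).1, by ring⟩
    calc _ ≤ _ := Finset.card_le_card hsub
      _ ≤ I.card := Finset.card_image_le
      _ = n := hIcard
  · have hsub : (G.image (fun p => p.1 / p.2)) ⊆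
        (Finset.Icc (1 - (n:ℤ)) ((n:ℤ) - 1)).image
          (fun d => -((1 + lam * (2:ℝ) ^ d) / (1 + (2:ℝ) ^ d))) := by
      intro x hx
      simp only [G, Finset.mem_image] at hx
      obtain ⟨y, ⟨p, hp, rfl⟩, rfl⟩ := hx
      obtain ⟨hp1, hp2⟩ := Finset.mem_product.mp hp
      simp only [I, Finset.mem_Icc] at hp1 hp2
      refine Finset.mem_image.mpr ⟨(p.2 : ℤ) - p.1, Finset.mem_Icc.mpr ⟨by omega, by omega⟩, ?_⟩
      have h2d : (2:ℝ) ^ ((p.2:ℤ) - p.1) = 2 ^ p.2 / 2 ^ p.1 := by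
        rw [zpow_sub₀ (by norm_num : (2:ℝ) ≠ 0), zpow_natCast, zpow_natCast]
      rw [h2d]
      have hi := hpow p.1
      have hj := hpow p.2
      have hne : -(2:ℝ) ^ p.1 - 2 ^ p.2 ≠ 0 := by nlinarith
      field_simp
      ring
    calc _ ≤ _ := Finset.card_le_card hsub
      _ ≤ (Finset.Icc (1 - (n:ℤ)) ((n:ℤ) - 1)).card := Finset.card_image_le
      _ = 2 * n - 1 := by rw [Int.card_Icc]; omega
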